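/- Let η_1, …, η_n be independent real random variables with mean zero such that max_{1≤i≤n} E|η_i|^β < ∞ for some β > 2, and let ρ > 0 and t > 0. Define the truncated and recentered variables η̃_i = η_i·1{|η_i| ≤ n^ρ} − E[η_i·1{|η_i| ≤ n^ρ}]. Then P((1/√n) Σ_{i=1}^n η̃_i ≥ t_ρ) ≤ K_n · exp(−t_ρ² / (2 M_2)), where M_s := (1/n) Σ_{i=1}^n E|η_i|^s, t_ρ := t − M_β · n^{ρ(1−β)+1/2}, and K_n := exp{(t³ n^{ρ−1/2} / (3 M_2²)) · exp(2 t n^{ρ−1/2} / M_2)}, provided t_ρ > 0. -/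

import Mathlib

open MeasureTheory ProbabilityTheory Filter Real

noncomputable section

lemma exp_le_taylor_nonpos {x : ℝ} (hx : x ≤ 0) : Real.exp x ≤ 1 + x + x ^ 2 / 2 := by
  have hy : 0 ≤ -x := by linarith
  have h1 : 1 - x + x ^ 2 / 2 ≤ Real.exp (-x) := by
    have := Real.sum_le_exp_of_nonneg hy 3
    simp [Finset.sum_range_succ, Nat.factorial] at this
    nlinarith [this]
  have hq : (0:ℝ) < 1 - x + x ^ 2 / 2 := by nlinarith
  have hmul : Real.exp x * Real.exp (-x) = 1 := by
    rw [← Real.exp_add]; simp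
  have h3 : Real.exp x * (1 - x + x ^ 2 / 2) ≤ 1 := by
    calc Real.exp x * (1 - x + x ^ 2 / 2) ≤ Real.exp x * Real.exp (-x) := by
          exact mul_le_mul_of_nonneg_left h1 (Real.exp_pos x).le
      _ = 1 := hmul
  nlinarith [Real.exp_pos x]

lemma exp_le_taylor_cubic_nonneg {x : ℝ} (hx : 0 ≤ x) :
    Real.exp x ≤ 1 + x + x ^ 2 / 2 + x ^ 3 / 6 * Real.exp x := by
  have key : MonotoneOn (fun y : ℝ => (1 + y + y ^ 2 / 2) * Real.exp (-y) + y ^ 3 / 6)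
      (Set.Ici (0:ℝ)) := by
    have hd : ∀ y : ℝ, HasDerivAt (fun y : ℝ => (1 + y + y ^ 2 / 2) * Real.exp (-y) + y ^ 3 / 6)
        (y ^ 2 / 2 * (1 - Real.exp (-y))) y := by
      intro y
      have h1 : HasDerivAt (fun y : ℝ => 1 + y + y ^ 2 / 2) (1 + y) y := by
        have := ((hasDerivAt_id y).const_add 1).add
          (((hasDerivAt_pow 2 y)).div_const 2)
        exact this.congr_deriv (by norm_num)
      have h2 : HasDerivAt (fun y : ℝ => Real.exp (-y)) (-Real.exp (-y)) y := by
        have := (hasDerivAt_neg y).exp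
        convert this using 1; ring
      have h3 : HasDerivAt (fun y : ℝ => y ^ 3 / 6) (y ^ 2 / 2) y := by
        have := (hasDerivAt_pow 3 y).div_const 6
        exact this.congr_deriv (by push_cast; ring)
      have := (h1.mul h2).add h3
      exact this.congr_deriv (by ring)
    apply monotoneOn_of_deriv_nonneg (convex_Ici 0)
    · exact Continuous.continuousOn (by fun_prop)
    · intro y hy
      exact (hd y).differentiableAt.differentiableWithinAt
    · intro y hy
      rw [(hd y).deriv]
      have hy0 : 0 < y := by simpa using hy
      have : Real.exp (-y) ≤ 1 := Real.exp_le_one_iff.mpr (by linarith)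
      nlinarith
  have h0 : (1:ℝ) ≤ (1 + x + x ^ 2 / 2) * Real.exp (-x) + x ^ 3 / 6 := by
    have := key (Set.self_mem_Ici) (Set.mem_Ici.mpr hx) hx
    simpa using this
  have hmul : Real.exp x * Real.exp (-x) = 1 := by rw [← Real.exp_add]; simp
  nlinarith [Real.exp_pos x, mul_le_mul_of_nonneg_left h0 (Real.exp_pos x).le]

lemma exp_le_taylor_cubic (x : ℝ) :
    Real.exp x ≤ 1 + x + x ^ 2 / 2 + |x| ^ 3 / 6 * Real.exp |x| := by
  rcases le_or_gt 0 x with hx | hx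
  · rw [abs_of_nonneg hx]; exact exp_le_taylor_cubic_nonneg hx
  · have := exp_le_taylor_nonpos hx.le
    have h2 : 0 ≤ |x| ^ 3 / 6 * Real.exp |x| :=
      mul_nonneg (by positivity) (Real.exp_pos _).le
    linarith

lemma integrable_of_abs_le {Ω : Type*} [MeasurableSpace Ω] {μ : Measure Ω}
    [IsFiniteMeasure μ] {X : Ω → ℝ} (hX : AEStronglyMeasurable X μ) {b : ℝ}
    (hbd : ∀ ω, |X ω| ≤ b) : Integrable X μ :=
  Integrable.mono' (integrable_const b) hX (ae_of_all _ fun ω => by simpa using hbd ω)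

lemma mgf_le_of_abs_le {Ω : Type*} [MeasurableSpace Ω] {μ : Measure Ω}
    [IsProbabilityMeasure μ] {X : Ω → ℝ} (hX : Measurable X) {b : ℝ}
    (hbd : ∀ ω, |X ω| ≤ b) (hmean : ∫ ω, X ω ∂μ = 0)
    {l : ℝ} (hl : 0 ≤ l) :
    mgf X μ l ≤ Real.exp (l ^ 2 / 2 * ∫ ω, (X ω) ^ 2 ∂μ
      + l ^ 3 / 6 * Real.exp (l * b) * ∫ ω, |X ω| ^ 3 ∂μ) := by
  -- integrability facts
  have hXint : Integrable X μ := integrable_of_abs_le hX.aestronglyMeasurable hbd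
  have hX2 : Integrable (fun ω => (X ω) ^ 2) μ := by
    apply integrable_of_abs_le (hX.pow_const 2).aestronglyMeasurable (b := b ^ 2)
    intro ω
    rw [abs_pow, ← sq_abs]
    exact pow_le_pow_left₀ (abs_nonneg _) (by simpa using hbd ω) 2
  have hX3 : Integrable (fun ω => |X ω| ^ 3) μ := by
    apply integrable_of_abs_le (hX.abs.pow_const 3).aestronglyMeasurable (b := b ^ 3)
    intro ω
    rw [abs_pow, abs_abs]
    exact pow_le_pow_left₀ (abs_nonneg _) (hbd ω) 3
  -- the dominating integrable function
  have hG : Integrable (fun ω => 1 + l * X ω + l ^ 2 * (X ω) ^ 2 / 2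
      + l ^ 3 * |X ω| ^ 3 / 6 * Real.exp (l * b)) μ := by
    apply Integrable.add
    apply Integrable.add
    apply Integrable.add (integrable_const 1) (hXint.const_mul l)
    · exact (hX2.const_mul (l ^ 2)).div_const 2
    · exact (((hX3.const_mul (l ^ 3)).div_const 6).mul_const _)
  -- pointwise bound
  have hpt : ∀ ω, Real.exp (l * X ω) ≤ 1 + l * X ω + l ^ 2 * (X ω) ^ 2 / 2
      + l ^ 3 * |X ω| ^ 3 / 6 * Real.exp (l * b) := by
    intro ω
    have h := exp_le_taylor_cubic (l * X ω)
    have habs : |l * X ω| = l * |X ω| := by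
      rw [abs_mul, abs_of_nonneg hl]
    have h2 : |l * X ω| ^ 3 / 6 * Real.exp |l * X ω|
        ≤ l ^ 3 * |X ω| ^ 3 / 6 * Real.exp (l * b) := by
      apply mul_le_mul
      · rw [habs, mul_pow]
      · exact Real.exp_le_exp.mpr (by rw [habs]; exact mul_le_mul_of_nonneg_left (hbd ω) hl)
      · exact (Real.exp_pos _).le
      · positivity
    calc Real.exp (l * X ω)
        ≤ 1 + l * X ω + (l * X ω) ^ 2 / 2 + |l * X ω| ^ 3 / 6 * Real.exp |l * X ω| := h
      _ ≤ 1 + l * X ω + l ^ 2 * (X ω) ^ 2 / 2 + l ^ 3 * |X ω| ^ 3 / 6 * Real.exp (l * b) := by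
          rw [mul_pow]; linarith
  -- integrate
  have hint : mgf X μ l ≤ 1 + l ^ 2 / 2 * ∫ ω, (X ω) ^ 2 ∂μ
      + l ^ 3 / 6 * Real.exp (l * b) * ∫ ω, |X ω| ^ 3 ∂μ := by
    have hexp_int : Integrable (fun ω => Real.exp (l * X ω)) μ := by
      apply integrable_of_abs_le ((hX.const_mul l).exp).aestronglyMeasurable (b := Real.exp (l * b))
      intro ω
      rw [abs_of_nonneg (Real.exp_pos _).le]
      exact Real.exp_le_exp.mpr (mul_le_mul_of_nonneg_left
        (le_trans (le_abs_self _) (hbd ω)) hl)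
    have := integral_mono hexp_int hG hpt
    rw [mgf]
    refine le_trans this (le_of_eq ?_)
    rw [integral_add, integral_add, integral_add, integral_const, integral_const_mul,
      hmean, integral_div, integral_const_mul, integral_mul_const, integral_div,
      integral_const_mul]
    · simp; ring
    · exact integrable_const 1
    · exact hXint.const_mul l
    · exact (integrable_const 1).add (hXint.const_mul l)
    · exact (hX2.const_mul (l ^ 2)).div_const 2
    · exact ((integrable_const 1).add (hXint.const_mul l)).add
        ((hX2.const_mul (l ^ 2)).div_const 2)
    · exact (((hX3.const_mul (l ^ 3)).div_const 6).mul_const _)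
  refine le_trans hint ?_
  have := Real.add_one_le_exp (l ^ 2 / 2 * ∫ ω, (X ω) ^ 2 ∂μ
      + l ^ 3 / 6 * Real.exp (l * b) * ∫ ω, |X ω| ^ 3 ∂μ)
  linarith

theorem truncated_sum_bound
    {Ω : Type*} [MeasurableSpace Ω] {μ : Measure Ω} [IsProbabilityMeasure μ]
    (n : ℕ) (hn : 0 < n) (η : Fin n → Ω → ℝ)
    (hmeas : ∀ i, Measurable (η i))
    (hindep : iIndepFun η μ)
    (hint : ∀ i, Integrable (η i) μ)
    (hmean : ∀ i, ∫ ω, η i ω ∂μ = 0)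
    (β : ℝ) (hβ : 2 < β)
    (hmom : ∀ i, Integrable (fun ω => |η i ω| ^ β) μ)
    (ρ t : ℝ) (hρ : 0 < ρ) (ht : 0 < t)
    (M : ℝ → ℝ) (hM : ∀ s : ℝ, M s = (∑ i, ∫ ω, |η i ω| ^ s ∂μ) / n)
    (tρ : ℝ) (htρ : tρ = t - M β * (n : ℝ) ^ (ρ * (1 - β) + 1 / 2))
    (htρpos : 0 < tρ)
    (Kn : ℝ) (hKn : Kn = Real.exp ((t ^ 3 * (n : ℝ) ^ (ρ - 1 / 2) / (3 * (M 2) ^ 2)) *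
      Real.exp (2 * t * (n : ℝ) ^ (ρ - 1 / 2) / M 2)))
    (ηt : Fin n → Ω → ℝ)
    (hηt : ∀ i ω, ηt i ω = (if |η i ω| ≤ (n : ℝ) ^ ρ then η i ω else 0) -
      ∫ ω', (if |η i ω'| ≤ (n : ℝ) ^ ρ then η i ω' else 0) ∂μ) :
    (μ {ω | tρ ≤ (∑ i, ηt i ω) / Real.sqrt n}).toReal ≤
      Kn * Real.exp (-(tρ ^ 2) / (2 * M 2)) := by
  classical
  have hn0 : (0:ℝ) < n := Nat.cast_pos.mpr hn
  set c : ℝ := (n:ℝ) ^ ρ with hc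
  have hcpos : 0 < c := Real.rpow_pos_of_pos hn0 ρ
  set T : Fin n → Ω → ℝ := fun i ω => if |η i ω| ≤ c then η i ω else 0 with hTdef
  set m : Fin n → ℝ := fun i => ∫ ω, T i ω ∂μ with hmdef
  have hTmeas : ∀ i, Measurable (T i) := fun i =>
    Measurable.ite (measurableSet_le (hmeas i).abs measurable_const) (hmeas i) measurable_const
  have hTbd : ∀ i ω, |T i ω| ≤ c := by
    intro i ω
    simp only [hTdef]
    split
    · assumption
    · simpa using hcpos.le
  have hTint : ∀ i, Integrable (T i) μ := fun i =>
    integrable_of_abs_le (hTmeas i).aestronglyMeasurable (hTbd i)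
  have hmbd : ∀ i, |m i| ≤ c := by
    intro i
    calc |m i| = ‖∫ ω, T i ω ∂μ‖ := (Real.norm_eq_abs _).symm
      _ ≤ ∫ ω, ‖T i ω‖ ∂μ := norm_integral_le_integral_norm _
      _ = ∫ ω, |T i ω| ∂μ := by simp [Real.norm_eq_abs]
      _ ≤ ∫ _ω, c ∂μ := integral_mono (hTint i).abs (integrable_const c) (hTbd i)
      _ = c := by simp
  have hηt' : ∀ i, ηt i = fun ω => T i ω - m i := by
    intro i; funext ω; rw [hηt i ω]
  have hηtmeas : ∀ i, Measurable (ηt i) := by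
    intro i; rw [hηt' i]; exact (hTmeas i).sub measurable_const
  have hηtbd : ∀ i ω, |ηt i ω| ≤ 2 * c := by
    intro i ω
    rw [hηt' i]
    calc |T i ω - m i| ≤ |T i ω| + |m i| := abs_sub _ _
      _ ≤ c + c := add_le_add (hTbd i ω) (hmbd i)
      _ = 2 * c := by ring
  have hηtmean : ∀ i, ∫ ω, ηt i ω ∂μ = 0 := by
    intro i
    rw [hηt' i]
    rw [integral_sub (hTint i) (integrable_const _), integral_const]
    simp [hmdef]
  -- integrability of squares
  have hηtint : ∀ i, Integrable (ηt i) μ := fun i =>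
    integrable_of_abs_le (hηtmeas i).aestronglyMeasurable (hηtbd i)
  have hV2 : ∀ i, Integrable (fun ω => (η i ω) ^ 2) μ := by
    intro i
    apply Integrable.mono' ((integrable_const 1).add (hmom i))
      ((hmeas i).pow_const 2).aestronglyMeasurable
    refine ae_of_all _ fun ω => ?_
    simp only [Pi.add_apply]
    rw [Real.norm_eq_abs, abs_of_nonneg (sq_nonneg _)]
    rcases le_or_gt (|η i ω|) 1 with h1 | h1
    · have : (η i ω) ^ 2 ≤ 1 := by nlinarith [abs_nonneg (η i ω), sq_abs (η i ω)]
      have h2 : (0:ℝ) ≤ |η i ω| ^ β := Real.rpow_nonneg (abs_nonneg _) β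
      linarith
    · have h2 : (η i ω) ^ 2 = |η i ω| ^ (2:ℝ) := by
        rw [show (2:ℝ) = ((2:ℕ):ℝ) by norm_num, Real.rpow_natCast, sq_abs]
      have h3 : |η i ω| ^ (2:ℝ) ≤ |η i ω| ^ β :=
        Real.rpow_le_rpow_of_exponent_le h1.le hβ.le
      linarith
  have hηtsq_int : ∀ i, Integrable (fun ω => (ηt i ω) ^ 2) μ := by
    intro i
    apply integrable_of_abs_le ((hηtmeas i).pow_const 2).aestronglyMeasurable
      (b := (2 * c) ^ 2)
    intro ω
    rw [abs_pow, ← sq_abs]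
    exact pow_le_pow_left₀ (abs_nonneg _) (by simpa using hηtbd i ω) 2
  -- second moment comparison
  have hsq : ∀ i, ∫ ω, (ηt i ω) ^ 2 ∂μ ≤ ∫ ω, (η i ω) ^ 2 ∂μ := by
    intro i
    have hTsq_int : Integrable (fun ω => (T i ω) ^ 2) μ := by
      apply integrable_of_abs_le ((hTmeas i).pow_const 2).aestronglyMeasurable (b := c ^ 2)
      intro ω
      rw [abs_pow, ← sq_abs]
      exact pow_le_pow_left₀ (abs_nonneg _) (by simpa using hTbd i ω) 2
    have key : ∫ ω, (ηt i ω) ^ 2 ∂μ = ∫ ω, (T i ω) ^ 2 ∂μ - (m i) ^ 2 := by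
      have h1 : ∀ ω, (ηt i ω) ^ 2 = (T i ω) ^ 2 - (2 * m i) * T i ω + (m i) ^ 2 := by
        intro ω; rw [hηt' i]; ring
      have hB : Integrable (fun ω => (2 * m i) * T i ω) μ := (hTint i).const_mul _
      have hA : Integrable (fun ω => (T i ω) ^ 2 - (2 * m i) * T i ω) μ := hTsq_int.sub hB
      have hm' : (∫ ω, T i ω ∂μ) = m i := rfl
      calc ∫ ω, (ηt i ω) ^ 2 ∂μ
          = ∫ ω, ((T i ω) ^ 2 - (2 * m i) * T i ω + (m i) ^ 2) ∂μ := by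
            exact integral_congr_ae (ae_of_all _ h1)
        _ = (∫ ω, (T i ω) ^ 2 ∂μ) - (2 * m i) * (∫ ω, T i ω ∂μ) + (m i) ^ 2 := by
            rw [integral_add hA (integrable_const _), integral_sub hTsq_int hB,
              integral_const_mul, integral_const]
            simp
        _ = ∫ ω, (T i ω) ^ 2 ∂μ - (m i) ^ 2 := by rw [hm']; ring
    rw [key]
    have h2 : ∫ ω, (T i ω) ^ 2 ∂μ ≤ ∫ ω, (η i ω) ^ 2 ∂μ := by
      apply integral_mono hTsq_int (hV2 i)
      intro ω
      simp only [hTdef]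
      split
      · exact le_refl _
      · simpa using sq_nonneg (η i ω)
    nlinarith [sq_nonneg (m i)]
  -- third moment comparison
  have hcube : ∀ i, ∫ ω, |ηt i ω| ^ 3 ∂μ ≤ 2 * c * ∫ ω, (ηt i ω) ^ 2 ∂μ := by
    intro i
    rw [← integral_const_mul]
    apply integral_mono _ ((hηtsq_int i).const_mul _)
    · intro ω
      have h1 := hηtbd i ω
      have h2 : |ηt i ω| ^ 3 = |ηt i ω| * (ηt i ω) ^ 2 := by
        rw [← sq_abs]; ring
      show |ηt i ω| ^ 3 ≤ 2 * c * (ηt i ω) ^ 2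
      rw [h2]
      exact mul_le_mul_of_nonneg_right h1 (sq_nonneg _)
    · apply integrable_of_abs_le ((hηtmeas i).abs.pow_const 3).aestronglyMeasurable
        (b := (2 * c) ^ 3)
      intro ω
      rw [abs_pow, abs_abs]
      exact pow_le_pow_left₀ (abs_nonneg _) (hηtbd i ω) 3
  -- M 2 in terms of squares
  have hM2eq : M 2 = (∑ i, ∫ ω, (η i ω) ^ 2 ∂μ) / n := by
    rw [hM 2]
    congr 1
    refine Finset.sum_congr rfl fun i _ => ?_
    refine integral_congr_ae (ae_of_all _ fun ω => ?_)
    simp only [Real.rpow_two, sq_abs]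
  have hM2nonneg : 0 ≤ M 2 := by
    rw [hM2eq]
    apply div_nonneg _ hn0.le
    exact Finset.sum_nonneg fun i _ => integral_nonneg fun ω => sq_nonneg _
  have hsum2 : ∑ i, ∫ ω, (η i ω) ^ 2 ∂μ = n * M 2 := by
    rw [hM2eq]; field_simp
  -- trivial case M 2 = 0
  have hMβ : 0 ≤ M β := by
    rw [hM β]
    exact div_nonneg (Finset.sum_nonneg fun i _ =>
      integral_nonneg fun ω => Real.rpow_nonneg (abs_nonneg _) β) hn0.le
  have htρt : tρ ≤ t := by
    rw [htρ]
    nlinarith [mul_nonneg hMβ (Real.rpow_nonneg hn0.le (ρ * (1 - β) + 1 / 2))]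
  rcases hM2nonneg.eq_or_lt with hM2 | hM2
  · -- degenerate case M 2 = 0
    have h1 : Kn = 1 := by rw [hKn, ← hM2]; simp
    have h2 : Real.exp (-(tρ ^ 2) / (2 * M 2)) = 1 := by rw [← hM2]; simp
    rw [h1, h2, one_mul]
    calc (μ {ω | tρ ≤ (∑ i, ηt i ω) / Real.sqrt n}).toReal
        ≤ (1 : ENNReal).toReal := ENNReal.toReal_mono ENNReal.one_ne_top prob_le_one
      _ = 1 := by simp
  · -- main case M 2 > 0
    have hM2ne : M 2 ≠ 0 := hM2.ne'
    set sn : ℝ := Real.sqrt n with hsn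
    have hsnpos : 0 < sn := Real.sqrt_pos.mpr hn0
    have hsn2 : sn ^ 2 = n := Real.sq_sqrt hn0.le
    set l : ℝ := tρ / (M 2 * sn) with hl
    have hlpos : 0 < l := div_pos htρpos (mul_pos hM2 hsnpos)
    set ν : ℝ := c / sn with hν
    have hνpos : 0 < ν := div_pos hcpos hsnpos
    have hνeq : ν = (n : ℝ) ^ (ρ - 1 / 2) := by
      rw [hν, hc, hsn, Real.sqrt_eq_rpow, ← Real.rpow_sub hn0]
    -- rewrite the event
    have hset : {ω | tρ ≤ (∑ i, ηt i ω) / sn} = {ω | tρ * sn ≤ (∑ i, ηt i) ω} := by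
      ext ω
      simp only [Set.mem_setOf_eq, Finset.sum_apply]
      rw [le_div_iff₀ hsnpos]
    -- properties of the sum
    have hSmeas : Measurable (∑ i, ηt i) := by
      have h1 : (∑ i, ηt i) = fun ω => ∑ i, ηt i ω := by
        funext ω; simp [Finset.sum_apply]
      rw [h1]
      exact Finset.measurable_sum Finset.univ fun i _ => hηtmeas i
    have hSbd : ∀ ω, |(∑ i, ηt i) ω| ≤ n * (2 * c) := by
      intro ω
      rw [Finset.sum_apply]
      calc |∑ i, ηt i ω| ≤ ∑ i, |ηt i ω| := Finset.abs_sum_le_sum_abs _ _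
        _ ≤ ∑ _i : Fin n, 2 * c := Finset.sum_le_sum fun i _ => hηtbd i ω
        _ = n * (2 * c) := by simp [Finset.sum_const, Finset.card_univ, nsmul_eq_mul]
    have hSexp_int : Integrable (fun ω => Real.exp (l * (∑ i, ηt i) ω)) μ := by
      apply integrable_of_abs_le ((hSmeas.const_mul l).exp).aestronglyMeasurable
        (b := Real.exp (l * (n * (2 * c))))
      intro ω
      rw [abs_of_nonneg (Real.exp_pos _).le]
      exact Real.exp_le_exp.mpr (mul_le_mul_of_nonneg_left
        (le_trans (le_abs_self _) (hSbd ω)) hlpos.le)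
    -- Chernoff bound
    have hcher := measure_ge_le_exp_mul_mgf (μ := μ) (X := ∑ i, ηt i) (t := l)
      (tρ * sn) hlpos.le hSexp_int
    -- independence of the truncated variables
    have hindep' : iIndepFun ηt μ := by
      have hφ : ∀ i, Measurable (fun x : ℝ => (if |x| ≤ c then x else 0) - m i) := by
        intro i
        exact (Measurable.ite (measurableSet_le measurable_abs measurable_const)
          measurable_id measurable_const).sub measurable_const
      have h := hindep.comp (fun i => fun x : ℝ => (if |x| ≤ c then x else 0) - m i) hφ
      have he : ηt = fun i => (fun x : ℝ => (if |x| ≤ c then x else 0) - m i) ∘ η i := by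
        funext i ω
        rw [hηt i ω]
        rfl
      rw [he]
      exact h
    have hmgf_sum : mgf (∑ i, ηt i) μ l = ∏ i, mgf (ηt i) μ l :=
      hindep'.mgf_sum hηtmeas Finset.univ
    -- per-factor mgf bounds
    set a : Fin n → ℝ := fun i => l ^ 2 / 2 * ∫ ω, (ηt i ω) ^ 2 ∂μ
      + l ^ 3 / 6 * Real.exp (l * (2 * c)) * ∫ ω, |ηt i ω| ^ 3 ∂μ with ha
    have hfac : ∀ i, mgf (ηt i) μ l ≤ Real.exp (a i) := fun i =>
      mgf_le_of_abs_le (hηtmeas i) (hηtbd i) (hηtmean i) hlpos.le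
    have hprod : ∏ i, mgf (ηt i) μ l ≤ Real.exp (∑ i, a i) := by
      rw [Real.exp_sum]
      exact Finset.prod_le_prod (fun i _ => mgf_nonneg) (fun i _ => hfac i)
    have hsuma : ∑ i, a i ≤ l ^ 2 / 2 * (n * M 2)
        + l ^ 3 / 6 * Real.exp (l * (2 * c)) * (2 * c * (n * M 2)) := by
      have h1 : ∑ i, ∫ ω, (ηt i ω) ^ 2 ∂μ ≤ n * M 2 := by
        rw [← hsum2]
        exact Finset.sum_le_sum fun i _ => hsq i
      have h2 : ∑ i, ∫ ω, |ηt i ω| ^ 3 ∂μ ≤ 2 * c * (n * M 2) := by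
        calc ∑ i, ∫ ω, |ηt i ω| ^ 3 ∂μ
            ≤ ∑ i, 2 * c * ∫ ω, (ηt i ω) ^ 2 ∂μ := Finset.sum_le_sum fun i _ => hcube i
          _ = 2 * c * ∑ i, ∫ ω, (ηt i ω) ^ 2 ∂μ := (Finset.mul_sum _ _ _).symm
          _ ≤ 2 * c * (n * M 2) := mul_le_mul_of_nonneg_left h1 (by positivity)
      have e1 : (0:ℝ) ≤ l ^ 2 / 2 := by positivity
      have e2 : (0:ℝ) ≤ l ^ 3 / 6 * Real.exp (l * (2 * c)) := by positivity
      calc ∑ i, a i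
          = l ^ 2 / 2 * (∑ i, ∫ ω, (ηt i ω) ^ 2 ∂μ)
            + l ^ 3 / 6 * Real.exp (l * (2 * c)) * (∑ i, ∫ ω, |ηt i ω| ^ 3 ∂μ) := by
            rw [ha, Finset.sum_add_distrib, ← Finset.mul_sum, ← Finset.mul_sum]
        _ ≤ _ := add_le_add (mul_le_mul_of_nonneg_left h1 e1)
            (mul_le_mul_of_nonneg_left h2 e2)
    -- assemble
    rw [hset]
    refine le_trans hcher ?_
    rw [hmgf_sum]
    have hEineq : Real.exp (-l * (tρ * sn)) * ∏ i, mgf (ηt i) μ l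
        ≤ Real.exp (-l * (tρ * sn) + (l ^ 2 / 2 * (n * M 2)
          + l ^ 3 / 6 * Real.exp (l * (2 * c)) * (2 * c * (n * M 2)))) := by
      rw [Real.exp_add]
      exact mul_le_mul_of_nonneg_left
        (le_trans hprod (Real.exp_le_exp.mpr hsuma)) (Real.exp_pos _).le
    refine le_trans hEineq ?_
    have harg : l * (2 * c) = 2 * tρ * ν / M 2 := by
      rw [hl, hν]
      field_simp
    have hexp_eq : -l * (tρ * sn) + (l ^ 2 / 2 * (n * M 2)
          + l ^ 3 / 6 * Real.exp (l * (2 * c)) * (2 * c * (n * M 2)))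
        = -(tρ ^ 2) / (2 * M 2) + (tρ ^ 3 * ν / (3 * (M 2) ^ 2)) * Real.exp (l * (2 * c)) := by
      have hn' : (n : ℝ) = sn ^ 2 := hsn2.symm
      rw [hν, hn', hl]
      field_simp
      ring
    rw [hexp_eq, harg]
    have hmono : (tρ ^ 3 * ν / (3 * (M 2) ^ 2)) * Real.exp (2 * tρ * ν / M 2)
        ≤ (t ^ 3 * ν / (3 * (M 2) ^ 2)) * Real.exp (2 * t * ν / M 2) := by
      have h3 : tρ ^ 3 ≤ t ^ 3 := pow_le_pow_left₀ htρpos.le htρt 3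
      have h4 : Real.exp (2 * tρ * ν / M 2) ≤ Real.exp (2 * t * ν / M 2) := by
        apply Real.exp_le_exp.mpr
        gcongr
      have h5 : 0 ≤ tρ ^ 3 * ν / (3 * (M 2) ^ 2) := by positivity
      have h6 : tρ ^ 3 * ν / (3 * (M 2) ^ 2) ≤ t ^ 3 * ν / (3 * (M 2) ^ 2) := by gcongr
      exact mul_le_mul h6 h4 (Real.exp_pos _).le (by positivity)
    calc Real.exp (-(tρ ^ 2) / (2 * M 2)
            + (tρ ^ 3 * ν / (3 * (M 2) ^ 2)) * Real.exp (2 * tρ * ν / M 2))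
        = Real.exp ((tρ ^ 3 * ν / (3 * (M 2) ^ 2)) * Real.exp (2 * tρ * ν / M 2))
            * Real.exp (-(tρ ^ 2) / (2 * M 2)) := by
          rw [← Real.exp_add]; ring_nf
      _ ≤ Kn * Real.exp (-(tρ ^ 2) / (2 * M 2)) := by
          apply mul_le_mul_of_nonneg_right _ (Real.exp_pos _).le
          rw [hKn, ← hνeq]
          exact Real.exp_le_exp.mpr hmono

end
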